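/- Let G be a graph and k a positive integer. An edge set F ⊆ E(G) is an inclusionwise minimal perfect k-star packing if and only if it is an inclusionwise minimal matching-k-cover, which in turn holds if and only if it is an inclusionwise minimal (1,k)-factor. -/

import Mathlib

/-- `M` is a matching of `G`: a set of edges of `G` that are pairwise vertex-disjoint. -/
def IsMatching {V : Type*} (G : SimpleGraph V) (M : Finset (Sym2 V)) : Prop :=
  ↑M ⊆ G.edgeSet ∧ (M : Set (Sym2 V)).Pairwise fun e f => ∀ v : V, ¬(v ∈ e ∧ v ∈ f)

/-- A vertex `v` is covered by an edge set `F` if some edge of `F` is incident to it. -/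
def Covers {V : Type*} (F : Finset (Sym2 V)) (v : V) : Prop := ∃ e ∈ F, v ∈ e

instance {V : Type*} [DecidableEq V] (F : Finset (Sym2 V)) (v : V) : Decidable (Covers F v) :=
  inferInstanceAs (Decidable (∃ e ∈ F, v ∈ e))

/-- A stable (independent) set of vertices. -/
def IsStable {V : Type*} (G : SimpleGraph V) (S : Finset V) : Prop :=
  ∀ u ∈ S, ∀ v ∈ S, ¬ G.Adj u v

/-- The external neighborhood `N(S)`. -/
def nbr {V : Type*} [Fintype V] [DecidableEq V] (G : SimpleGraph V) [DecidableRel G.Adj]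
    (S : Finset V) : Finset V :=
  Finset.univ.filter fun w => w ∉ S ∧ ∃ u ∈ S, G.Adj u w

/-- degree of a vertex in an edge set -/
def degF {V : Type*} [DecidableEq V] (F : Finset (Sym2 V)) (v : V) : ℕ :=
  (F.filter fun e => v ∈ e).card

/-- `F` is a perfect `k`-star packing: every component of `F` is a star with
between 1 and `k` edges, and `F` covers every vertex.  Components are stars with
at most `k` edges iff all degrees are at most `k` and no edge joins two vertices
of degree at least 2. -/
def IsPerfectKStarPacking {V : Type*} [DecidableEq V] (G : SimpleGraph V)
    (F : Finset (Sym2 V)) (k : ℕ) : Prop :=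
  ↑F ⊆ G.edgeSet ∧ (∀ v : V, degF F v ≤ k) ∧
    (∀ e ∈ F, ∀ u v : V, e = s(u, v) → degF F u = 1 ∨ degF F v = 1) ∧
    ∀ v : V, Covers F v

/-- `F` is a matching-`k`-cover: the union of `k` matchings of `G` covering every vertex. -/
def IsMatchingKCover {V : Type*} [DecidableEq V] (G : SimpleGraph V) (F : Finset (Sym2 V)) (k : ℕ) : Prop :=
  (∃ M : Fin k → Finset (Sym2 V), (∀ i, IsMatching G (M i)) ∧ F = Finset.univ.sup M) ∧
    ∀ v : V, Covers F v

/-- `F` is a `(1,k)`-factor: every vertex is incident to at least 1 and at most `k` edges of `F`. -/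
def Is1kFactor {V : Type*} [DecidableEq V] (G : SimpleGraph V)
    (F : Finset (Sym2 V)) (k : ℕ) : Prop :=
  ↑F ⊆ G.edgeSet ∧ ∀ v : V, 1 ≤ degF F v ∧ degF F v ≤ k

/-- inclusionwise minimality of an edge set with respect to a property -/
def EdgeSetMinimalFor {V : Type*} (P : Finset (Sym2 V) → Prop) (F : Finset (Sym2 V)) : Prop :=
  P F ∧ ∀ F' ⊂ F, ¬ P F'
section Aux

open Finset

variable {V : Type*} [Fintype V] [DecidableEq V]

lemma covers_iff_degF (F : Finset (Sym2 V)) (v : V) : Covers F v ↔ 1 ≤ degF F v := by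
  unfold Covers degF
  rw [Nat.one_le_iff_ne_zero, Ne, Finset.card_eq_zero, ← Ne, ← Finset.nonempty_iff_ne_empty,
    Finset.filter_nonempty_iff]

lemma degF_mono {F F' : Finset (Sym2 V)} (h : F' ⊆ F) (v : V) : degF F' v ≤ degF F v :=
  Finset.card_le_card (Finset.filter_subset_filter _ h)

lemma degF_erase (F : Finset (Sym2 V)) (e : Sym2 V) (v : V) :
    degF (F.erase e) v = if e ∈ F ∧ v ∈ e then degF F v - 1 else degF F v := by
  unfold degF
  rw [Finset.filter_erase]
  split_ifs with h
  · exact Finset.card_erase_of_mem (Finset.mem_filter.mpr ⟨h.1, h.2⟩)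
  · rw [Finset.erase_eq_of_notMem]
    simp only [Finset.mem_filter]
    tauto

/-- union of k matchings → (1,k)-factor -/
lemma p2_p3 (G : SimpleGraph V) (F : Finset (Sym2 V)) (k : ℕ) (hk : 0 < k)
    (h : IsMatchingKCover G F k) : Is1kFactor G F k := by
  obtain ⟨⟨M, hM, rfl⟩, hcov⟩ := h
  refine ⟨?_, fun v => ⟨(covers_iff_degF _ v).mp (hcov v), ?_⟩⟩
  · intro e he
    rw [Finset.mem_coe, Finset.mem_sup] at he
    obtain ⟨i, _, hi⟩ := he
    exact (hM i).1 hi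
  · -- degree bound: map each edge through v to the index of a matching containing it
    have hex : ∀ e ∈ (Finset.univ.sup M).filter (fun e => v ∈ e), ∃ i : Fin k, e ∈ M i := by
      intro e he
      rw [Finset.mem_filter, Finset.mem_sup] at he
      obtain ⟨⟨i, _, hi⟩, _⟩ := he
      exact ⟨i, hi⟩
    classical
    set g : Sym2 V → Fin k := fun e =>
      if h : ∃ i : Fin k, e ∈ M i then h.choose else ⟨0, hk⟩ with hg
    have key : ∀ e ∈ (Finset.univ.sup M).filter (fun e => v ∈ e), e ∈ M (g e) := by
      intro e he
      have h := hex e he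
      simp only [hg, dif_pos h]
      exact h.choose_spec
    have : degF (Finset.univ.sup M) v ≤ (Finset.univ : Finset (Fin k)).card := by
      apply Finset.card_le_card_of_injOn g (fun _ _ => Finset.mem_univ _)
      intro e he f hf hef
      by_contra hne
      have hve : v ∈ e := (Finset.mem_filter.mp he).2
      have hvf : v ∈ f := (Finset.mem_filter.mp hf).2
      have h1 := key e he
      have h2 := key f hf
      rw [hef] at h1
      exact (hM (g f)).2 h1 h2 hne v ⟨hve, hvf⟩
    simpa using this

/-- perfect k-star packing → union of k matchings -/
lemma p1_p2 (G : SimpleGraph V) (F : Finset (Sym2 V)) (k : ℕ) (hk : 0 < k)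
    (h : IsPerfectKStarPacking G F k) : IsMatchingKCover G F k := by
  classical
  obtain ⟨hsub, hdeg, hstar, hcov⟩ := h
  refine ⟨?_, hcov⟩
  -- a linear embedding of Sym2 V into ℕ
  let φ : Sym2 V → ℕ := fun e => (Fintype.equivFin (Sym2 V) e : ℕ)
  have hφ : Function.Injective φ := fun a b h => by
    have := Fin.val_injective h
    exact (Fintype.equivFin (Sym2 V)).injective this
  let rank : Finset (Sym2 V) → Sym2 V → ℕ := fun S e => (S.filter fun f => φ f < φ e).card
  have rank_lt : ∀ (S : Finset (Sym2 V)) (e), e ∈ S → rank S e < S.card := by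
    intro S e he
    apply Finset.card_lt_card
    constructor
    · exact Finset.filter_subset _ _
    · intro hss
      have := Finset.mem_filter.mp (hss he)
      omega
  have rank_inj : ∀ (S : Finset (Sym2 V)) (e f), e ∈ S → f ∈ S → e ≠ f →
      rank S e ≠ rank S f := by
    have mono : ∀ (S : Finset (Sym2 V)) (e f), e ∈ S → φ e < φ f → rank S e < rank S f := by
      intro S e f he hlt
      apply Finset.card_lt_card
      constructor
      · intro x hx
        simp only [Finset.mem_filter] at hx ⊢
        exact ⟨hx.1, hx.2.trans hlt⟩
      · intro hss
        have : e ∈ S.filter fun g => φ g < φ e :=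
          hss (Finset.mem_filter.mpr ⟨he, hlt⟩)
        have := Finset.mem_filter.mp this
        omega
    intro S e f he hf hne
    rcases lt_trichotomy (φ e) (φ f) with h' | h' | h'
    · exact Nat.ne_of_lt (mono S e f he h')
    · exact absurd (hφ h') hne
    · exact Nat.ne_of_gt (mono S f e hf h')
  -- the color of an edge
  set C : Sym2 V → Prop := fun e => ∃ w, w ∈ e ∧ 2 ≤ degF F w with hC
  set col : Sym2 V → ℕ := fun e =>
    if h : C e then rank (F.filter fun f => h.choose ∈ f) e else 0 with hcol
  have col_lt : ∀ e ∈ F, col e < k := by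
    intro e he
    by_cases h : C e
    · obtain ⟨hw1, hw2⟩ := h.choose_spec
      have hmem : e ∈ F.filter fun f => h.choose ∈ f := Finset.mem_filter.mpr ⟨he, hw1⟩
      have := rank_lt _ e hmem
      have hle : (F.filter fun f => h.choose ∈ f).card ≤ k := hdeg h.choose
      simp only [hcol, dif_pos h]
      omega
    · simp only [hcol, dif_neg h]
      exact hk
  -- uniqueness of the center
  have center_unique : ∀ e ∈ F, ∀ v w, v ∈ e → w ∈ e → 2 ≤ degF F v → 2 ≤ degF F w →
      v = w := by
    intro e he v w hv hw h2v h2w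
    obtain ⟨x, rfl⟩ := Sym2.mem_iff_exists.mp hv
    have := hstar _ he v x rfl
    have hdx : degF F x = 1 := by
      rcases this with h | h
      · omega
      · exact h
    rcases Sym2.mem_iff.mp hw with h | h
    · exact h.symm
    · subst h; omega
  refine ⟨fun i => F.filter fun e => col e = i.val, fun i => ⟨?_, ?_⟩, ?_⟩
  · intro e he
    exact hsub (Finset.mem_coe.mpr (Finset.mem_filter.mp he).1)
  · intro e he f hf hne v ⟨hve, hvf⟩
    simp only [Finset.coe_filter, Set.mem_setOf_eq] at he hf
    obtain ⟨heF, hce⟩ := he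
    obtain ⟨hfF, hcf⟩ := hf
    have h2v : 2 ≤ degF F v := by
      rw [show (2 : ℕ) = 1 + 1 from rfl, Nat.add_one_le_iff]
      exact Finset.one_lt_card.mpr ⟨e, Finset.mem_filter.mpr ⟨heF, hve⟩,
        f, Finset.mem_filter.mpr ⟨hfF, hvf⟩, hne⟩
    have hCe : C e := ⟨v, hve, h2v⟩
    have hCf : C f := ⟨v, hvf, h2v⟩
    have hcev : hCe.choose = v :=
      center_unique e heF _ v hCe.choose_spec.1 hve hCe.choose_spec.2 h2v
    have hcfv : hCf.choose = v :=
      center_unique f hfF _ v hCf.choose_spec.1 hvf hCf.choose_spec.2 h2v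
    have he' : col e = rank (F.filter fun g => v ∈ g) e := by
      simp only [hcol, dif_pos hCe, hcev]
    have hf' : col f = rank (F.filter fun g => v ∈ g) f := by
      simp only [hcol, dif_pos hCf, hcfv]
    have := rank_inj (F.filter fun g => v ∈ g) e f
      (Finset.mem_filter.mpr ⟨heF, hve⟩) (Finset.mem_filter.mpr ⟨hfF, hvf⟩) hne
    rw [← he', ← hf', hce, hcf] at this
    exact this rfl
  · ext e
    rw [Finset.mem_sup]
    constructor
    · intro he
      exact ⟨⟨col e, col_lt e he⟩, Finset.mem_univ _,
        Finset.mem_filter.mpr ⟨he, rfl⟩⟩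
    · rintro ⟨i, _, hi⟩
      exact (Finset.mem_filter.mp hi).1

/-- a minimal (1,k)-factor is a perfect k-star packing -/
lemma min3_p1 (G : SimpleGraph V) (F : Finset (Sym2 V)) (k : ℕ)
    (h : EdgeSetMinimalFor (fun F' => Is1kFactor G F' k) F) : IsPerfectKStarPacking G F k := by
  obtain ⟨⟨hsub, hdeg⟩, hmin⟩ := h
  refine ⟨hsub, fun v => (hdeg v).2, ?_, fun v => (covers_iff_degF F v).mpr (hdeg v).1⟩
  intro e he u v huv
  by_contra hcon
  push_neg at hcon
  obtain ⟨hu, hv⟩ := hcon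
  have h2u : 2 ≤ degF F u := by have := (hdeg u).1; omega
  have h2v : 2 ≤ degF F v := by have := (hdeg v).1; omega
  apply hmin (F.erase e) (Finset.erase_ssubset he)
  refine ⟨fun f hf => hsub (Finset.mem_coe.mpr (Finset.mem_of_mem_erase hf)), fun w => ?_⟩
  have hle : degF (F.erase e) w ≤ degF F w := degF_mono (Finset.erase_subset _ _) w
  refine ⟨?_, hle.trans (hdeg w).2⟩
  rw [degF_erase]
  split_ifs with h
  · rcases Sym2.mem_iff.mp (huv ▸ h.2) with rfl | rfl <;> omega
  · exact (hdeg w).1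

/-- every set with property P contains a minimal one -/
lemma exists_min (P : Finset (Sym2 V) → Prop) :
    ∀ F : Finset (Sym2 V), P F → ∃ F'' ⊆ F, EdgeSetMinimalFor P F'' := by
  intro F
  induction F using Finset.strongInduction with
  | _ F ih =>
    intro hP
    by_cases hmin : ∀ F' ⊂ F, ¬ P F'
    · exact ⟨F, subset_rfl, hP, hmin⟩
    · push_neg at hmin
      obtain ⟨F', hF', hPF'⟩ := hmin
      obtain ⟨F'', hsub, hm⟩ := ih F' hF' hPF'
      exact ⟨F'', hsub.trans hF'.subset, hm⟩

end Aux

theorem stmt_7 {V : Type*} [Fintype V] [DecidableEq V] (G : SimpleGraph V)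
    (k : ℕ) (hk : 0 < k) (F : Finset (Sym2 V)) :
    (EdgeSetMinimalFor (fun F' => IsPerfectKStarPacking G F' k) F ↔
        EdgeSetMinimalFor (fun F' => IsMatchingKCover G F' k) F) ∧
      (EdgeSetMinimalFor (fun F' => IsMatchingKCover G F' k) F ↔
        EdgeSetMinimalFor (fun F' => Is1kFactor G F' k) F) := by
  have i12 := fun F' => p1_p2 G F' k hk
  have i23 := fun F' => p2_p3 G F' k hk
  have m31 := fun F' => min3_p1 G F' k
  have m1_to_m3 : EdgeSetMinimalFor (fun F' => IsPerfectKStarPacking G F' k) F →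
      EdgeSetMinimalFor (fun F' => Is1kFactor G F' k) F := by
    rintro ⟨h1, hmin⟩
    refine ⟨i23 F (i12 F h1), ?_⟩
    intro F' hF' hP3
    obtain ⟨F'', hsub, hm⟩ := exists_min (fun F' => Is1kFactor G F' k) F' hP3
    exact hmin F'' (lt_of_le_of_lt hsub hF') (m31 F'' hm)
  have m3_to_m1 : EdgeSetMinimalFor (fun F' => Is1kFactor G F' k) F →
      EdgeSetMinimalFor (fun F' => IsPerfectKStarPacking G F' k) F := by
    rintro ⟨h3, hmin⟩
    refine ⟨m31 F ⟨h3, hmin⟩, ?_⟩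
    intro F' hF' hP1
    exact hmin F' hF' (i23 F' (i12 F' hP1))
  have m2_to_m3 : EdgeSetMinimalFor (fun F' => IsMatchingKCover G F' k) F →
      EdgeSetMinimalFor (fun F' => Is1kFactor G F' k) F := by
    rintro ⟨h2, hmin⟩
    refine ⟨i23 F h2, ?_⟩
    intro F' hF' hP3
    obtain ⟨F'', hsub, hm⟩ := exists_min (fun F' => Is1kFactor G F' k) F' hP3
    exact hmin F'' (lt_of_le_of_lt hsub hF') (i12 F'' (m31 F'' hm))
  have m3_to_m2 : EdgeSetMinimalFor (fun F' => Is1kFactor G F' k) F →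
      EdgeSetMinimalFor (fun F' => IsMatchingKCover G F' k) F := by
    rintro ⟨h3, hmin⟩
    refine ⟨i12 F (m31 F ⟨h3, hmin⟩), ?_⟩
    intro F' hF' hP2
    exact hmin F' hF' (i23 F' hP2)
  exact ⟨⟨fun h => m3_to_m2 (m1_to_m3 h), fun h => m3_to_m1 (m2_to_m3 h)⟩,
    ⟨m2_to_m3, m3_to_m2⟩⟩
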